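/- Let U be an idempotent ultrafilter on (ℕ,+) and let r ∈ 2^ℕ. If μ and ν are in 𝔸_U, then h_r(μˆν) = h_r(μ)ˆh_r(ν). -/

import Mathlib

open scoped Classical

/-- The free binary system (free magma) on one generator. -/
abbrev 𝕋 : Type := FreeMagma Unit

/-- The generator `1` of `𝕋`. -/
def e1 : 𝕋 := FreeMagma.of ()

/-- `#(t)`: the number of occurrences of the generator in `t`. -/
def cnt : 𝕋 → ℕ
  | FreeMagma.of _ => 1
  | FreeMagma.mul a b => cnt a + cnt b

/-- The space `ℓ^∞(S)` of bounded real-valued functions on `S`. -/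
def Bdd (S : Type*) : Type _ := {f : S → ℝ // ∃ M, ∀ s, |f s| ≤ M}

/-- Package a function as an element of `Bdd S` (junk value if unbounded). -/
noncomputable def liftBdd {S : Type*} (g : S → ℝ) : Bdd S :=
  if h : ∃ M, ∀ s, |g s| ≤ M then ⟨g, h⟩ else ⟨fun _ => 0, 0, fun _ => by simp⟩

/-- The constant function as an element of `Bdd S`. -/
def constB (S : Type*) (c : ℝ) : Bdd S := ⟨fun _ => c, |c|, fun _ => le_rfl⟩

/-- The characteristic function of `E` as an element of `Bdd S`. -/
noncomputable def indB {S : Type*} (E : Set S) : Bdd S :=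
  liftBdd (fun s => if s ∈ E then 1 else 0)

/-- `Pr S`: finitely additive probability measures on `S`, identified with the
positive normalized linear functionals on `ℓ^∞(S)`.  The weak* topology is the
subspace topology inherited from the product topology on `Bdd S → ℝ`. -/
def PrSet (S : Type*) : Set (Bdd S → ℝ) :=
  {φ | (∀ f g h : Bdd S, (∀ s, h.1 s = f.1 s + g.1 s) → φ h = φ f + φ g) ∧
       (∀ (c : ℝ) (f g : Bdd S), (∀ s, g.1 s = c * f.1 s) → φ g = c * φ f) ∧
       (∀ f : Bdd S, (∀ s, 0 ≤ f.1 s) → 0 ≤ φ f) ∧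
       φ (constB S 1) = 1}

/-- `μ(E)`: the measure of a set `E ⊆ S`. -/
noncomputable def mE {S : Type*} (φ : Bdd S → ℝ) (E : Set S) : ℝ := φ (indB E)

/-- The product `μ ⊗ ν` of finitely additive measures:
`μ⊗ν(f) = μ(x ↦ ν(y ↦ f(x,y)))`. -/
noncomputable def prodM {S T : Type*} (φ : Bdd S → ℝ) (ψ : Bdd T → ℝ) :
    Bdd (S × T) → ℝ :=
  fun f => φ (liftBdd fun x => ψ (liftBdd fun y => f.1 (x, y)))

/-- The extension of a binary operation `op` on `S` to `Pr S`:
`μ⋆ν(f) = μ(x ↦ ν(y ↦ f(x ⋆ y)))`. -/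
noncomputable def starM {S : Type*} (op : S → S → S) (φ ψ : Bdd S → ℝ) :
    Bdd S → ℝ :=
  fun f => φ (liftBdd fun x => ψ (liftBdd fun y => f.1 (op x y)))

/-- The extension of `ˆ` to `Pr 𝕋`. -/
noncomputable def hmul (φ ψ : Bdd 𝕋 → ℝ) : Bdd 𝕋 → ℝ := starM (· * ·) φ ψ

/-- Finitely supported probability measures: finite convex combinations of
point evaluations. -/
def FinSuppPr (S : Type*) : Set (Bdd S → ℝ) :=
  {φ | ∃ (F : Finset S) (w : S → ℝ), (∀ s ∈ F, 0 ≤ w s) ∧ (∑ s ∈ F, w s) = 1 ∧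
      ∀ f : Bdd S, φ f = ∑ s ∈ F, w s * f.1 s}

/-- `𝔸_n`: finitely supported probability measures concentrated on `𝕋_n`. -/
def Asets (n : ℕ) : Set (Bdd 𝕋 → ℝ) :=
  {φ | ∃ (F : Finset 𝕋) (w : 𝕋 → ℝ), (∀ t ∈ F, cnt t = n) ∧ (∀ t ∈ F, 0 ≤ w t) ∧
      (∑ t ∈ F, w t) = 1 ∧ ∀ f : Bdd 𝕋, φ f = ∑ t ∈ F, w t * f.1 t}

/-- The extension of `+` on `ℕ` to ultrafilters: `A ∈ U+V` iff
`{m : {n : m+n ∈ A} ∈ V} ∈ U`. -/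
noncomputable def addU (U V : Ultrafilter ℕ) : Ultrafilter ℕ :=
  U.bind fun m => V.map fun n => m + n

/-- `𝔸_U`: the `U`-limit of the sets `𝔸_m`. -/
def AU (U : Ultrafilter ℕ) : Set (Bdd 𝕋 → ℝ) :=
  {μ | μ ∈ PrSet 𝕋 ∧ ∀ W : Set (Bdd 𝕋 → ℝ), IsOpen W → μ ∈ W →
      {m : ℕ | (W ∩ Asets m).Nonempty} ∈ U}

/-- The extension of `ˆ` to ultrafilters on `𝕋`: `E ∈ UˆV` iff
`{u : {v : uˆv ∈ E} ∈ V} ∈ U`. -/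
noncomputable def umul (U V : Ultrafilter 𝕋) : Ultrafilter 𝕋 :=
  U.bind fun u => V.map fun v => u * v

/-- Substitution of measures into a term `t`:
`t(μ_0,…,μ_{m-1})(f)` is the nested integral
`μ_0(x_0 ↦ ⋯ μ_{m-1}(x_{m-1} ↦ f(t(x⃗)))⋯)`. -/
noncomputable def substM : 𝕋 → List (Bdd 𝕋 → ℝ) → (Bdd 𝕋 → ℝ)
  | FreeMagma.of _, μs => μs.headI
  | FreeMagma.mul a b, μs =>
      hmul (substM a (μs.take (cnt a))) (substM b (μs.drop (cnt a)))

/-- `t_k`: iteratively remove the carets of `t` involving only leaves of index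
greater than `k`. -/
def tk : 𝕋 → ℕ → 𝕋
  | FreeMagma.of _, _ => e1
  | FreeMagma.mul a b, k => if k < cnt a then tk a k * e1 else a * tk b (k - cnt a)

/-- `l_k(t) = #(t_k) - 2` (truncated subtraction). -/
def lk (t : 𝕋) (k : ℕ) : ℕ := cnt (tk t k) - 2

/-- The subterm `t/σ` of `t` at address `σ` (`false` = left/`0`, `true` = right/`1`). -/
def subT : 𝕋 → List Bool → Option 𝕋
  | t, [] => some t
  | FreeMagma.of _, _ :: _ => none
  | FreeMagma.mul a b, c :: σ => if c then subT b σ else subT a σ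

/-- `σ <_lex ς` for incompatible binary sequences: at the first coordinate where
they differ, `σ` has `0` and `ς` has `1`. -/
def lexLT (σ ς : List Bool) : Prop :=
  ∃ p σ' ς', σ = p ++ (false :: σ') ∧ ς = p ++ (true :: ς')

/-- `x₀·E`. -/
def x0E (E : Set 𝕋) : Set 𝕋 :=
  {x | ∃ a b c : 𝕋, x = a * (b * c) ∧ (a * b) * c ∈ E}

/-- `x₁·E`. -/
def x1E (E : Set 𝕋) : Set 𝕋 :=
  {x | ∃ s a b c : 𝕋, x = s * (a * (b * c)) ∧ s * ((a * b) * c) ∈ E}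

/-- `u_σ` for a nonempty finite binary sequence `σ`. -/
def uSeq : List Bool → 𝕋
  | [] => e1
  | [_] => e1
  | b :: σ => if b then e1 * uSeq σ else uSeq σ * e1

/-- `a ≪ b`: for some `p`, `#(a) < 2^p` and `2^p` divides `#(b)`. -/
def ll (a b : 𝕋) : Prop := ∃ p : ℕ, cnt a < 2 ^ p ∧ 2 ^ p ∣ cnt b

/-- `r↾n`: the first `n` values of `r` as a finite binary sequence. -/
def rList (r : ℕ → Bool) (n : ℕ) : List Bool := (List.range n).map r

/-- The map `h_r : 𝕋 → 𝕋`. -/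
noncomputable def hr (r : ℕ → Bool) : 𝕋 → 𝕋
  | FreeMagma.of _ => uSeq (rList r 1)
  | FreeMagma.mul a b =>
      if ll a b then hr r a * hr r b else uSeq (rList r (cnt a + cnt b))

/-- The action of `h_r` on measures: `h_r(μ)(f) = μ(f ∘ h_r)`. -/
noncomputable def hrM (r : ℕ → Bool) (φ : Bdd 𝕋 → ℝ) : Bdd 𝕋 → ℝ :=
  fun f => φ (liftBdd fun t => f.1 (hr r t))

/-- `lev`: `l(1) = 0`, `l(aˆb) = l(a) + 1`. -/
def lev : 𝕋 → ℕ
  | FreeMagma.of _ => 0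
  | FreeMagma.mul a _ => lev a + 1

/-- `C` is closed under `ˆ`. -/
def HClosed (C : Set (Bdd 𝕋 → ℝ)) : Prop := ∀ μ ∈ C, ∀ ν ∈ C, hmul μ ν ∈ C


/-! ### Auxiliary lemmas -/

lemma liftBdd_val {S : Type*} {g : S → ℝ} (h : ∃ M, ∀ s, |g s| ≤ M) :
    (liftBdd g).1 = g := by
  have hl : liftBdd g = (⟨g, h⟩ : Bdd S) := dif_pos h
  rw [hl]

lemma liftBdd_self {S : Type*} (f : Bdd S) : liftBdd f.1 = f :=
  Subtype.ext (liftBdd_val f.2)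

lemma liftBdd_comp {S T : Type*} (f : Bdd S) (g : T → S) :
    (liftBdd fun t => f.1 (g t)).1 = fun t => f.1 (g t) := by
  obtain ⟨M, hM⟩ := f.2
  exact liftBdd_val ⟨M, fun t => hM (g t)⟩

lemma indB_val {S : Type*} (E : Set S) :
    (indB E).1 = fun s => if s ∈ E then (1:ℝ) else 0 := by
  rw [indB]
  apply liftBdd_val
  exact ⟨1, fun s => by split_ifs <;> norm_num⟩

lemma indB_abs {S : Type*} (E : Set S) (s : S) : |(indB E).1 s| ≤ 1 := by
  simp only [indB_val]
  split_ifs <;> norm_num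

lemma ps_add {S : Type*} {φ : Bdd S → ℝ} (hφ : φ ∈ PrSet S) {a b : S → ℝ}
    (ha : ∃ M, ∀ s, |a s| ≤ M) (hb : ∃ M, ∀ s, |b s| ≤ M) :
    φ (liftBdd fun s => a s + b s) = φ (liftBdd a) + φ (liftBdd b) := by
  obtain ⟨Ma, hMa⟩ := ha; obtain ⟨Mb, hMb⟩ := hb
  refine hφ.1 _ _ _ (fun s => ?_)
  rw [liftBdd_val ⟨Ma, hMa⟩, liftBdd_val ⟨Mb, hMb⟩,
    liftBdd_val ⟨Ma + Mb, fun s => (abs_add_le _ _).trans (add_le_add (hMa s) (hMb s))⟩]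

lemma ps_smul {S : Type*} {φ : Bdd S → ℝ} (hφ : φ ∈ PrSet S) (c : ℝ) {a : S → ℝ}
    (ha : ∃ M, ∀ s, |a s| ≤ M) :
    φ (liftBdd fun s => c * a s) = c * φ (liftBdd a) := by
  obtain ⟨Ma, hMa⟩ := ha
  refine hφ.2.1 c _ _ (fun s => ?_)
  rw [liftBdd_val ⟨Ma, hMa⟩,
    liftBdd_val ⟨|c| * Ma, fun s => by
      rw [abs_mul]
      exact mul_le_mul_of_nonneg_left (hMa s) (abs_nonneg c)⟩]

lemma ps_const {S : Type*} {φ : Bdd S → ℝ} (hφ : φ ∈ PrSet S) (c : ℝ) :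
    φ (liftBdd fun _ : S => c) = c := by
  have h := hφ.2.1 c (constB S 1) (liftBdd fun _ : S => c) (fun s => by
    rw [liftBdd_val ⟨|c|, fun _ => le_rfl⟩]
    show c = c * 1
    ring)
  rw [h, hφ.2.2.2, mul_one]

lemma ps_pos {S : Type*} {φ : Bdd S → ℝ} (hφ : φ ∈ PrSet S) {a : S → ℝ}
    (ha : ∃ M, ∀ s, |a s| ≤ M) (h : ∀ s, 0 ≤ a s) : 0 ≤ φ (liftBdd a) := by
  refine hφ.2.2.1 _ (fun s => ?_)
  rw [liftBdd_val ha]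
  exact h s

lemma ps_mono {S : Type*} {φ : Bdd S → ℝ} (hφ : φ ∈ PrSet S) {a b : S → ℝ}
    (ha : ∃ M, ∀ s, |a s| ≤ M) (hb : ∃ M, ∀ s, |b s| ≤ M)
    (hle : ∀ s, a s ≤ b s) : φ (liftBdd a) ≤ φ (liftBdd b) := by
  obtain ⟨Ma, hMa⟩ := ha; obtain ⟨Mb, hMb⟩ := hb
  have hd : ∃ M, ∀ s, |b s - a s| ≤ M :=
    ⟨Mb + Ma, fun s => (abs_sub _ _).trans (add_le_add (hMb s) (hMa s))⟩
  have h1 := ps_add hφ ⟨Ma, hMa⟩ hd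
  have h2 : (fun s => a s + (b s - a s)) = b := by funext s; ring
  rw [h2] at h1
  have h3 := ps_pos hφ hd (fun s => sub_nonneg.2 (hle s))
  linarith

lemma ps_bound {S : Type*} {φ : Bdd S → ℝ} (hφ : φ ∈ PrSet S) {a : S → ℝ} {M : ℝ}
    (ha : ∀ s, |a s| ≤ M) : |φ (liftBdd a)| ≤ M := by
  have hba : ∃ M, ∀ s, |a s| ≤ M := ⟨M, ha⟩
  have h1 := ps_mono hφ hba ⟨|M|, fun _ => le_rfl⟩ (fun s => (abs_le.1 (ha s)).2)
  have h2 := ps_mono hφ (a := fun _ : S => -M) ⟨|M|, fun _ => (abs_neg M).le.trans le_rfl⟩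
    hba (fun s => (abs_le.1 (ha s)).1)
  rw [ps_const hφ] at h1 h2
  exact abs_le.2 ⟨h2, h1⟩

lemma ps_compl {S : Type*} {φ : Bdd S → ℝ} (hφ : φ ∈ PrSet S) {E : Set S}
    (hE : φ (indB E) = 1) : φ (indB Eᶜ) = 0 := by
  have h1 := ps_add hφ (a := (indB E).1) (b := (indB Eᶜ).1) (indB E).2 (indB Eᶜ).2
  have h2 : (fun s => (indB E).1 s + (indB Eᶜ).1 s) = fun _ : S => (1:ℝ) := by
    funext s
    simp only [indB_val]
    by_cases h : s ∈ E
    · rw [if_pos h, if_neg (by simp [h])]; ring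
    · rw [if_neg h, if_pos (by simp [h])]; ring
  rw [h2, ps_const hφ, liftBdd_self, liftBdd_self] at h1
  linarith

lemma ps_agree_le {S : Type*} {φ : Bdd S → ℝ} (hφ : φ ∈ PrSet S) {E : Set S}
    {a b : S → ℝ} {Ma Mb : ℝ} (ha : ∀ s, |a s| ≤ Ma) (hb : ∀ s, |b s| ≤ Mb)
    (hE : φ (indB E) = 1) (hab : ∀ s ∈ E, a s = b s) :
    φ (liftBdd b) ≤ φ (liftBdd a) := by
  set M : ℝ := Ma + Mb with hM
  have hgb : ∃ N, ∀ s, |M * (indB Eᶜ).1 s| ≤ N := by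
    refine ⟨|M|, fun s => ?_⟩
    rw [abs_mul]
    calc |M| * |(indB Eᶜ).1 s| ≤ |M| * 1 :=
          mul_le_mul_of_nonneg_left (indB_abs Eᶜ s) (abs_nonneg M)
      _ = |M| := mul_one _
  have key : φ (liftBdd fun s => a s + M * (indB Eᶜ).1 s) = φ (liftBdd a) := by
    rw [ps_add hφ ⟨Ma, ha⟩ hgb, ps_smul hφ M (indB Eᶜ).2, liftBdd_self,
      ps_compl hφ hE]
    ring
  rw [← key]
  refine ps_mono hφ ⟨Mb, hb⟩ ?_ (fun s => ?_)
  · obtain ⟨N, hN⟩ := hgb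
    exact ⟨Ma + N, fun s => (abs_add_le _ _).trans (add_le_add (ha s) (hN s))⟩
  · by_cases h : s ∈ E
    · have h0 : (indB Eᶜ).1 s = 0 := by
        simp only [indB_val]
        rw [if_neg (by simp [h])]
      rw [h0, mul_zero, add_zero]
      exact (hab s h).ge
    · have h1 : (indB Eᶜ).1 s = 1 := by
        simp only [indB_val]
        rw [if_pos (by simp [h])]
      rw [h1, mul_one]
      have hb2 := (abs_le.1 (hb s)).2
      have ha1 := (abs_le.1 (ha s)).1
      rw [hM]; linarith

lemma ps_agree {S : Type*} {φ : Bdd S → ℝ} (hφ : φ ∈ PrSet S) {E : Set S}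
    {a b : S → ℝ} (ha : ∃ M, ∀ s, |a s| ≤ M) (hb : ∃ M, ∀ s, |b s| ≤ M)
    (hE : φ (indB E) = 1) (hab : ∀ s ∈ E, a s = b s) :
    φ (liftBdd a) = φ (liftBdd b) := by
  obtain ⟨Ma, hMa⟩ := ha; obtain ⟨Mb, hMb⟩ := hb
  exact le_antisymm
    (ps_agree_le hφ hMb hMa hE (fun s hs => (hab s hs).symm))
    (ps_agree_le hφ hMa hMb hE hab)

lemma pow_dvd_mem (U : Ultrafilter ℕ) (hU : addU U U = U) (q : ℕ) (hq : 0 < q) :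
    {n : ℕ | q ∣ n} ∈ U := by
  have hIio : Set.Iio q ∈ U.map (· % q) := by
    have h : ((· % q) : ℕ → ℕ) ⁻¹' Set.Iio q = Set.univ := by
      ext n; simp [Nat.mod_lt _ hq]
    rw [Ultrafilter.mem_map, h]
    exact Filter.univ_mem
  obtain ⟨j, hjq, hjU⟩ := Ultrafilter.eq_pure_of_finite_mem (Set.finite_Iio q) hIio
  have hAj : {n : ℕ | n % q = j} ∈ U := by
    have h1 : {n : ℕ | n % q = j} = ((· % q) : ℕ → ℕ) ⁻¹' {j} := by
      ext n; simp
    rw [h1, ← Ultrafilter.mem_map, hjU]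
    simp
  have hjlt : j < q := hjq
  have hj0 : j = 0 := by
    have hmem : {n : ℕ | n % q = j} ∈ addU U U := by rw [hU]; exact hAj
    have hB : {m : ℕ | {n : ℕ | (m + n) % q = j} ∈ U} ∈ U := hmem
    obtain ⟨m, hm⟩ := Filter.nonempty_of_mem (Filter.inter_mem hB hAj)
    obtain ⟨n, hn⟩ := Filter.nonempty_of_mem (Filter.inter_mem hm.1 hAj)
    have hmn : (m + n) % q = j := hn.1
    have hnq : n % q = j := hn.2
    have hmq : m % q = j := hm.2
    have hkey : (j + j) % q = j := by
      have h := Nat.add_mod m n q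
      rw [hmq, hnq] at h
      rw [← h]; exact hmn
    rcases lt_or_ge (j + j) q with h | h
    · rw [Nat.mod_eq_of_lt h] at hkey; omega
    · rw [Nat.mod_eq_sub_mod h, Nat.mod_eq_of_lt (by omega)] at hkey; omega
  refine Filter.mem_of_superset hAj (fun n hn => ?_)
  subst hj0
  exact Nat.dvd_of_mod_eq_zero hn

lemma AU_conc {U : Ultrafilter ℕ} {μ : Bdd 𝕋 → ℝ} (hμ : μ ∈ AU U) {A : Set ℕ}
    (hA : A ∈ U) : μ (indB {t : 𝕋 | cnt t ∈ A}) = 1 := by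
  set E : Set 𝕋 := {t | cnt t ∈ A} with hEdef
  by_contra hne
  have hεpos : 0 < |1 - μ (indB E)| := by
    rw [abs_pos, sub_ne_zero]
    exact fun h => hne h.symm
  set W : Set (Bdd 𝕋 → ℝ) :=
    (fun ψ => ψ (indB E)) ⁻¹' Metric.ball (μ (indB E)) (|1 - μ (indB E)|) with hWdef
  have hWopen : IsOpen W :=
    IsOpen.preimage (continuous_apply (indB E)) Metric.isOpen_ball
  have hμW : μ ∈ W := by
    simp only [hWdef, Set.mem_preimage, Metric.mem_ball, dist_self]
    exact hεpos
  have hU1 := hμ.2 W hWopen hμW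
  obtain ⟨m, hm⟩ := Filter.nonempty_of_mem (Filter.inter_mem hU1 hA)
  obtain ⟨ψ, hψW, hψA⟩ := hm.1
  have hmA : m ∈ A := hm.2
  obtain ⟨F, w, hcnt, hw0, hw1, hval⟩ := hψA
  have h1 : ψ (indB E) = 1 := by
    rw [hval]
    have hind : ∀ t ∈ F, (indB E).1 t = 1 := by
      intro t ht
      have htE : t ∈ E := by
        rw [hEdef]
        simp only [Set.mem_setOf_eq, hcnt t ht]
        exact hmA
      simp only [indB_val]
      rw [if_pos htE]
    calc ∑ t ∈ F, w t * (indB E).1 t = ∑ t ∈ F, w t := by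
          refine Finset.sum_congr rfl (fun t ht => ?_)
          rw [hind t ht, mul_one]
      _ = 1 := hw1
  rw [hWdef] at hψW
  simp only [Set.mem_preimage, Metric.mem_ball, Real.dist_eq, h1] at hψW
  exact absurd hψW (lt_irrefl _)

lemma hr_mul_of_dvd (r : ℕ → Bool) (x y : 𝕋) (hy : 2 ^ cnt x ∣ cnt y) :
    hr r (x * y) = hr r x * hr r y := by
  have hll : ll x y := ⟨cnt x, Nat.lt_two_pow_self, hy⟩
  show hr r (FreeMagma.mul x y) = hr r x * hr r y
  rw [hr]
  rw [if_pos hll]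

/-- Claim 6.3: `h_r(μˆν) = h_r(μ)ˆh_r(ν)` for `μ, ν ∈ 𝔸_U`. -/
theorem hr_multiplicative (U : Ultrafilter ℕ) (hU : addU U U = U) (r : ℕ → Bool)
    (μ ν : Bdd 𝕋 → ℝ) (hμ : μ ∈ AU U) (hν : ν ∈ AU U) :
    hrM r (hmul μ ν) = hmul (hrM r μ) (hrM r ν) := by
  funext f
  obtain ⟨Mf, hMf⟩ := f.2
  have hνP : ν ∈ PrSet 𝕋 := hν.1
  show μ (liftBdd fun x => ν (liftBdd fun y =>
        (liftBdd fun t => f.1 (hr r t)).1 (x * y)))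
      = μ (liftBdd fun t => (liftBdd fun x => ν (liftBdd fun s =>
          (liftBdd fun y => f.1 (x * y)).1 (hr r s))).1 (hr r t))
  simp only [liftBdd_comp]
  have hH : (liftBdd fun x => ν (liftBdd fun s => f.1 (x * hr r s))).1
      = fun x => ν (liftBdd fun s => f.1 (x * hr r s)) := by
    refine liftBdd_val ⟨Mf, fun x => ?_⟩
    exact ps_bound hνP (fun s => hMf _)
  rw [hH]
  have hout : (fun x => ν (liftBdd fun y => f.1 (hr r (x * y))))
      = fun x => ν (liftBdd fun s => f.1 (hr r x * hr r s)) := by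
    funext x
    refine ps_agree hνP (E := {t : 𝕋 | cnt t ∈ {n : ℕ | 2 ^ cnt x ∣ n}})
      ⟨Mf, fun y => hMf _⟩ ⟨Mf, fun y => hMf _⟩
      (AU_conc hν (pow_dvd_mem U hU _ (pow_pos two_pos _))) (fun y hy => ?_)
    rw [hr_mul_of_dvd r x y hy]
  rw [hout]
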